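/- Suppose σ : ℝ → ℝ satisfies |σ(z)| ≤ C_σ|z| + C̃_σ for all z ∈ ℝ with finite constants C_σ, C̃_σ, the initial data u_0 : ℤ^d → ℝ is bounded, and the (deterministic) forcing ξ = {ξ_n(x)} satisfies C_ξ := sup_{n≥0} sup_{x∈ℤ^d} |ξ_n(x)| < ∞. Then the (unique, recursively defined) solution u of the discrete heat equation u_{n+1}(x) = (𝒫u_n)(x) + σ(u_n(x))ξ_n(x) satisfies limsup_{n→∞} (1/n) sup_{x∈ℤ^d} ln |u_n(x)| ≤ ln(1 + C_σ·C_ξ). -/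

import Mathlib

open Filter Real

noncomputable section

/-- Transition operator of the random walk on `ℤ^d` with step distribution `p`. -/
def transOp {d : ℕ} (p : (Fin d → ℤ) → ℝ) (h : (Fin d → ℤ) → ℝ) (x : Fin d → ℤ) : ℝ :=
  ∑' y : Fin d → ℤ, p (y - x) * h y

theorem aux_tendsto (D c : ℝ) (hD : 1 ≤ D) (hc : 0 ≤ c) :
    Tendsto (fun n : ℕ => ((n : ℝ))⁻¹ * Real.log (D + c * n)) atTop (nhds 0) := by
  have hlog : Tendsto (fun x : ℝ => Real.log x / x) atTop (nhds 0) := by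
    simpa using Real.tendsto_pow_log_div_mul_add_atTop 1 0 1 one_ne_zero
  have h1 : Tendsto (fun n : ℕ => Real.log n / n) atTop (nhds 0) :=
    hlog.comp tendsto_natCast_atTop_atTop
  have h2 : Tendsto (fun n : ℕ => Real.log (D + c) / n) atTop (nhds 0) :=
    tendsto_const_nhds.div_atTop (tendsto_natCast_atTop_atTop)
  have h3 : Tendsto (fun n : ℕ => Real.log (D + c) / n + Real.log n / n) atTop (nhds 0) := by
    simpa using h2.add h1
  apply squeeze_zero' ?_ ?_ h3
  · filter_upwards [eventually_ge_atTop 1] with n hn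
    have hn1 : (1 : ℝ) ≤ n := by exact_mod_cast hn
    have h0 : (1:ℝ) ≤ D + c * n := by nlinarith
    have := Real.log_nonneg h0
    have : (0:ℝ) ≤ ((n:ℝ))⁻¹ := by positivity
    positivity
  · filter_upwards [eventually_ge_atTop 1] with n hn
    have hn1 : (1 : ℝ) ≤ n := by exact_mod_cast hn
    have hpos : (0:ℝ) < n := by linarith
    have hb : D + c * n ≤ (D + c) * n := by nlinarith
    have h4 : Real.log (D + c * n) ≤ Real.log ((D + c) * n) :=
      Real.log_le_log (by nlinarith) hb
    have h5 : Real.log ((D + c) * n) = Real.log (D + c) + Real.log n :=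
      Real.log_mul (by nlinarith) (by positivity)
    have h6 : Real.log (D + c * n) ≤ Real.log (D + c) + Real.log n := h5 ▸ h4
    rw [inv_mul_eq_div, ← add_div]
    gcongr

set_option maxHeartbeats 1000000 in
theorem discrete_heat_deterministic_growth
    {d : ℕ} (hd : 1 ≤ d)
    (p : (Fin d → ℤ) → ℝ) (hp_nonneg : ∀ x, 0 ≤ p x) (hp_le : ∀ x, p x ≤ 1)
    (hp_sum : ∑' x : Fin d → ℤ, p x = 1)
    (σ : ℝ → ℝ) (Cσ C'σ : ℝ)
    (hσ : ∀ z : ℝ, |σ z| ≤ Cσ * |z| + C'σ)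
    (u₀ : (Fin d → ℤ) → ℝ) (hu₀_bdd : ∃ B : ℝ, ∀ x, |u₀ x| ≤ B)
    (ξ : ℕ → (Fin d → ℤ) → ℝ)
    (Cξ : ℝ) (hCξ : ∀ n x, |ξ n x| ≤ Cξ)
    (u : ℕ → (Fin d → ℤ) → ℝ)
    (hu_init : ∀ x, u 0 x = u₀ x)
    (hu_rec : ∀ n x, u (n + 1) x = transOp p (u n) x + σ (u n x) * ξ n x) :
    limsup (fun n : ℕ =>
        (((n : ℝ)⁻¹ : ℝ) : EReal) *
          ⨆ x : Fin d → ℤ, ((Real.log |u n x| : ℝ) : EReal)) atTop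
      ≤ ((Real.log (1 + Cσ * Cξ) : ℝ) : EReal) := by
  obtain ⟨B, hB⟩ := hu₀_bdd
  have hB0 : 0 ≤ B := le_trans (abs_nonneg _) (hB (fun _ => 0))
  have hCξ0 : 0 ≤ Cξ := le_trans (abs_nonneg _) (hCξ 0 (fun _ => 0))
  have hC'σ0 : 0 ≤ C'σ := by
    have h1 := hσ 0
    have h2 := abs_nonneg (σ 0)
    simp at h1
    linarith
  have hCσ0 : 0 ≤ Cσ := by
    by_contra h
    push_neg at h
    have hz : (0:ℝ) < (C'σ + 1) / (-Cσ) := by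
      apply div_pos (by linarith) (by linarith)
    have h1 := hσ ((C'σ + 1) / (-Cσ))
    rw [abs_of_pos hz] at h1
    have hne : Cσ ≠ 0 := ne_of_lt h
    have h2 : Cσ * ((C'σ + 1) / (-Cσ)) = -(C'σ + 1) := by
      field_simp
    rw [h2] at h1
    have := abs_nonneg (σ ((C'σ + 1) / (-Cσ)))
    linarith
  set q : ℝ := 1 + Cσ * Cξ with hqdef
  have hq1 : 1 ≤ q := by nlinarith
  set c : ℝ := C'σ * Cξ with hcdef
  have hc0 : 0 ≤ c := mul_nonneg hC'σ0 hCξ0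
  set D : ℝ := B + 1 with hDdef
  have hD1 : 1 ≤ D := by linarith
  have hp_summ : Summable p := by
    by_contra h
    rw [tsum_eq_zero_of_not_summable h] at hp_sum
    norm_num at hp_sum
  -- growth bound by induction
  have key : ∀ n x, |u n x| ≤ (D + c * n) * q ^ n := by
    intro n
    induction n with
    | zero =>
      intro x
      rw [hu_init]
      have := hB x
      simp only [Nat.cast_zero, mul_zero, add_zero, pow_zero, mul_one]
      linarith
    | succ n ih =>
      intro x
      set M : ℝ := (D + c * n) * q ^ n with hMdef
      have hqn : (1:ℝ) ≤ q ^ n := one_le_pow₀ hq1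
      have hM1 : 1 ≤ M := by
        rw [hMdef]
        nlinarith [hqn, mul_nonneg hc0 (Nat.cast_nonneg (α := ℝ) n), hD1]
      have hM0 : 0 ≤ M := by linarith
      have hps : Summable (fun y : Fin d → ℤ => p (y - x)) :=
        ((Equiv.subRight x).summable_iff).mpr hp_summ
      have hsum1 : ∑' y : Fin d → ℤ, p (y - x) = 1 := by
        rw [← hp_sum]
        exact (Equiv.subRight x).tsum_eq p
      have hsummand : ∀ y : Fin d → ℤ, |p (y - x) * u n y| ≤ p (y - x) * M := by
        intro y
        rw [abs_mul, abs_of_nonneg (hp_nonneg _)]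
        exact mul_le_mul_of_nonneg_left (ih y) (hp_nonneg _)
      have habs_summ : Summable (fun y : Fin d → ℤ => |p (y - x) * u n y|) :=
        Summable.of_nonneg_of_le (fun y => abs_nonneg _) hsummand (hps.mul_right M)
      have hsumm2 : Summable (fun y : Fin d → ℤ => p (y - x) * u n y) :=
        habs_summ.of_abs
      have htrans : |transOp p (u n) x| ≤ M := by
        unfold transOp
        calc |∑' y : Fin d → ℤ, p (y - x) * u n y|
            ≤ ∑' y : Fin d → ℤ, |p (y - x) * u n y| := by
              have hnorm : Summable (fun y : Fin d → ℤ => ‖p (y - x) * u n y‖) := by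
                simpa only [Real.norm_eq_abs] using habs_summ
              simpa only [Real.norm_eq_abs] using norm_tsum_le_tsum_norm hnorm
          _ ≤ ∑' y : Fin d → ℤ, p (y - x) * M :=
              Summable.tsum_le_tsum hsummand habs_summ (hps.mul_right M)
          _ = (∑' y : Fin d → ℤ, p (y - x)) * M := tsum_mul_right
          _ = M := by rw [hsum1, one_mul]
      have hstep : |u (n + 1) x| ≤ q * M + c := by
        rw [hu_rec]
        calc |transOp p (u n) x + σ (u n x) * ξ n x|
            ≤ |transOp p (u n) x| + |σ (u n x)| * |ξ n x| := by
              rw [← abs_mul]; exact abs_add_le _ _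
          _ ≤ M + (Cσ * |u n x| + C'σ) * Cξ := by
              apply add_le_add htrans
              apply mul_le_mul (hσ _) (hCξ n x) (abs_nonneg _)
              have := abs_nonneg (u n x)
              nlinarith
          _ ≤ M + (Cσ * M + C'σ) * Cξ := by nlinarith [ih x, abs_nonneg (u n x)]
          _ = q * M + c := by rw [hqdef, hcdef]; ring
      calc |u (n + 1) x| ≤ q * M + c := hstep
        _ ≤ (D + c * (n + 1 : ℕ)) * q ^ (n + 1) := by
            rw [pow_succ, hMdef]
            push_cast
            have hqn1 : (1:ℝ) ≤ q ^ n * q := by nlinarith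
            nlinarith [Nat.cast_nonneg (α := ℝ) n]
  -- pointwise log bound
  have hlog_bound : ∀ n (x : Fin d → ℤ),
      Real.log |u n x| ≤ Real.log (D + c * n) + n * Real.log q := by
    intro n x
    have hDn1 : (1:ℝ) ≤ D + c * n := by nlinarith [Nat.cast_nonneg (α := ℝ) n]
    have hqn : (1:ℝ) ≤ q ^ n := one_le_pow₀ hq1
    have hM1 : (1:ℝ) ≤ (D + c * n) * q ^ n := by nlinarith
    have h1 : Real.log |u n x| ≤ Real.log ((D + c * n) * q ^ n) := by
      rcases eq_or_lt_of_le (abs_nonneg (u n x)) with h | h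
      · rw [← h, Real.log_zero]; exact Real.log_nonneg hM1
      · exact Real.log_le_log h (key n x)
    rwa [Real.log_mul (by linarith) (by positivity), Real.log_pow] at h1
  -- the comparison sequence
  set b : ℕ → ℝ := fun n => ((n : ℝ))⁻¹ * (Real.log (D + c * n) + n * Real.log q) with hbdef
  have hev : ∀ᶠ n : ℕ in atTop,
      ((((n : ℝ)⁻¹ : ℝ) : EReal) *
          ⨆ x : Fin d → ℤ, ((Real.log |u n x| : ℝ) : EReal)) ≤ ((b n : ℝ) : EReal) := by
    filter_upwards [eventually_ge_atTop 1] with n hn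
    set S : EReal := ⨆ x : Fin d → ℤ, ((Real.log |u n x| : ℝ) : EReal) with hSdef
    have hSle : S ≤ ((Real.log (D + c * n) + n * Real.log q : ℝ) : EReal) :=
      iSup_le fun x => EReal.coe_le_coe_iff.mpr (hlog_bound n x)
    have hSge : ((Real.log |u n (fun _ => 0)| : ℝ) : EReal) ≤ S :=
      le_iSup (fun x : Fin d → ℤ => ((Real.log |u n x| : ℝ) : EReal)) (fun _ => 0)
    have hS_ne_top : S ≠ ⊤ := ne_top_of_le_ne_top (EReal.coe_ne_top _) hSle
    have hS_ne_bot : S ≠ ⊥ := by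
      intro h
      rw [h] at hSge
      simp at hSge
    have hs : S.toReal ≤ Real.log (D + c * n) + n * Real.log q := by
      have h := EReal.toReal_le_toReal hSle hS_ne_bot (EReal.coe_ne_top _)
      rwa [EReal.toReal_coe] at h
    rw [← EReal.coe_toReal hS_ne_top hS_ne_bot, ← EReal.coe_mul]
    apply EReal.coe_le_coe_iff.mpr
    exact mul_le_mul_of_nonneg_left hs (by positivity)
  have hb_tendsto : Tendsto b atTop (nhds (Real.log q)) := by
    have h0 := aux_tendsto D c hD1 hc0
    have h1 : Tendsto (fun n : ℕ => ((n : ℝ))⁻¹ * Real.log (D + c * n) + Real.log q)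
        atTop (nhds (Real.log q)) := by
      simpa using h0.add (tendsto_const_nhds (x := Real.log q) (f := atTop (α := ℕ)))
    apply h1.congr'
    filter_upwards [eventually_ge_atTop 1] with n hn
    have hn0 : ((n : ℝ)) ≠ 0 := Nat.cast_ne_zero.mpr (Nat.one_le_iff_ne_zero.mp hn)
    rw [hbdef]
    field_simp
  have hcoe_tendsto : Tendsto (fun n => ((b n : ℝ) : EReal)) atTop
      (nhds ((Real.log q : ℝ) : EReal)) :=
    (continuous_coe_real_ereal.tendsto _).comp hb_tendsto
  calc limsup (fun n : ℕ =>
        (((n : ℝ)⁻¹ : ℝ) : EReal) *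
          ⨆ x : Fin d → ℤ, ((Real.log |u n x| : ℝ) : EReal)) atTop
      ≤ limsup (fun n => ((b n : ℝ) : EReal)) atTop := limsup_le_limsup hev
    _ = ((Real.log q : ℝ) : EReal) := hcoe_tendsto.limsup_eq
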